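/- Let E be a real inner product space, let K ⊆ E be a nonempty set with diameter at most D > 0 (i.e., ‖v − w‖ ≤ D for all v, w ∈ K), let G > 0, T ≥ 1, and set η = D/(G·√T). Let f_1, …, f_T : E → ℝ, let x_1, …, x_{T+1} ∈ K, and let g_1, …, g_T ∈ E satisfy: (i) ‖g_t‖ ≤ G for each t; (ii) the subgradient inequality f_t(v) ≥ f_t(x_t) + ⟨g_t, v − x_t⟩ for every v ∈ K and each t; (iii) the projection property ‖x_{t+1} − z‖ ≤ ‖(x_t − η·g_t) − z‖ for every z ∈ K and each t. Then for every u ∈ K: ∑_{t=1}^T f_t(x_t) − ∑_{t=1}^T f_t(u) ≤ D·G·√T. -/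

import Mathlib

open scoped RealInnerProductSpace

theorem stmt_19 {E : Type*} [NormedAddCommGroup E] [InnerProductSpace ℝ E]
    (K : Set E) (hK : K.Nonempty) (D G : ℝ) (hD : 0 < D) (hG : 0 < G)
    (hdiam : ∀ v ∈ K, ∀ w ∈ K, ‖v - w‖ ≤ D)
    (T : ℕ) (hT : 1 ≤ T) (η : ℝ) (hη : η = D / (G * Real.sqrt T))
    (f : ℕ → E → ℝ) (x g : ℕ → E)
    (hxK : ∀ t ∈ Finset.Icc 1 (T + 1), x t ∈ K)
    (hg : ∀ t ∈ Finset.Icc 1 T, ‖g t‖ ≤ G)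
    (hsub : ∀ t ∈ Finset.Icc 1 T, ∀ v ∈ K,
      f t (x t) + ⟪g t, v - x t⟫ ≤ f t v)
    (hproj : ∀ t ∈ Finset.Icc 1 T, ∀ z ∈ K,
      ‖x (t + 1) - z‖ ≤ ‖(x t - η • g t) - z‖) :
    ∀ u ∈ K,
      ∑ t ∈ Finset.Icc 1 T, f t (x t) - ∑ t ∈ Finset.Icc 1 T, f t u ≤
        D * G * Real.sqrt T := by
  intro u hu
  have hTpos : (0:ℝ) < (T:ℝ) := by exact_mod_cast Nat.lt_of_lt_of_le Nat.zero_lt_one hT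
  have hs : (0:ℝ) < Real.sqrt T := Real.sqrt_pos.mpr hTpos
  have hs2 : Real.sqrt T * Real.sqrt T = (T:ℝ) := Real.mul_self_sqrt hTpos.le
  have hη0 : 0 < η := by rw [hη]; positivity
  set b : ℕ → ℝ := fun t => ‖x t - u‖^2 with hb
  have key : ∀ t ∈ Finset.Icc 1 T,
      2*η*(f t (x t) - f t u) ≤ (b t - b (t+1)) + η^2*G^2 := by
    intro t ht
    have h1 : f t (x t) - f t u ≤ ⟪g t, x t - u⟫ := by
      have h := hsub t ht u hu
      have hinner : ⟪g t, u - x t⟫ = -⟪g t, x t - u⟫ := by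
        rw [← inner_neg_right]; congr 1; abel
      rw [hinner] at h
      linarith
    have hp := hproj t ht u hu
    have hq : ‖x (t+1) - u‖^2 ≤ ‖(x t - u) - η • g t‖^2 := by
      have he : (x t - η • g t) - u = (x t - u) - η • g t := by abel
      rw [← he]
      exact pow_le_pow_left₀ (norm_nonneg _) hp 2
    have hexp : ‖(x t - u) - η • g t‖^2
        = ‖x t - u‖^2 - 2*(η*⟪g t, x t - u⟫) + η^2*‖g t‖^2 := by
      rw [norm_sub_sq_real, inner_smul_right, real_inner_comm, norm_smul,
        mul_pow, Real.norm_eq_abs, sq_abs]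
    have hgt : ‖g t‖^2 ≤ G^2 :=
      pow_le_pow_left₀ (norm_nonneg _) (hg t ht) 2
    have h2 : b (t+1) ≤ b t - 2*(η*⟪g t, x t - u⟫) + η^2*‖g t‖^2 := by
      simpa [hb, hexp] using hq
    nlinarith [sq_nonneg η, mul_le_mul_of_nonneg_left h1 (le_of_lt hη0),
      mul_le_mul_of_nonneg_left hgt (sq_nonneg η)]
  have hsum := Finset.sum_le_sum key
  have hLHS : ∑ t ∈ Finset.Icc 1 T, (2*η*(f t (x t) - f t u))
      = 2*η*(∑ t ∈ Finset.Icc 1 T, f t (x t) - ∑ t ∈ Finset.Icc 1 T, f t u) := by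
    rw [← Finset.mul_sum, Finset.sum_sub_distrib]
  have htel' : ∀ n : ℕ, ∑ t ∈ Finset.Icc 1 n, (b t - b (t+1)) = b 1 - b (n+1) := by
    intro n
    induction n with
    | zero => simp
    | succ n ih => rw [Finset.sum_Icc_succ_top (by omega), ih]; ring
  have htel := htel' T
  have hRHS : ∑ t ∈ Finset.Icc 1 T, ((b t - b (t+1)) + η^2*G^2)
      = (b 1 - b (T+1)) + (T:ℝ)*(η^2*G^2) := by
    rw [Finset.sum_add_distrib, htel, Finset.sum_const, Nat.card_Icc]
    simp [nsmul_eq_mul]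
  rw [hLHS, hRHS] at hsum
  have hb1 : b 1 ≤ D^2 := by
    have hx1 : x 1 ∈ K := hxK 1 (Finset.mem_Icc.mpr ⟨le_refl 1, by omega⟩)
    have := hdiam (x 1) hx1 u hu
    exact pow_le_pow_left₀ (norm_nonneg _) this 2
  have hbT : 0 ≤ b (T+1) := sq_nonneg _
  have hE1 : 2*η*(D*G*Real.sqrt T) = 2*D^2 := by
    rw [hη]; field_simp
  have hE2 : (T:ℝ)*(η^2*G^2) = D^2 := by
    rw [hη]; field_simp; rw [Real.sq_sqrt hTpos.le]
  have : 2*η*(∑ t ∈ Finset.Icc 1 T, f t (x t) - ∑ t ∈ Finset.Icc 1 T, f t u)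
      ≤ 2*η*(D*G*Real.sqrt T) := by
    rw [hE1]; linarith
  exact le_of_mul_le_mul_left this (by positivity)
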